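/- The refined Antimirov automaton accepts the trace closure: for every regular expression E over Σ and every word u, u ∈ [⟦E⟧] if and only if either (u = ε and E↓) or (u ≠ ε and there exist E₀, E₁ with E →^{I*} (u; [E₀, E₁]), E₀↓ and E₁↓). -/

import Mathlib

open RegularExpression
open scoped Classical

universe u

variable {α : Type u}

/-- Two words are independent if every letter of the first is independent
of every letter of the second. -/
def WIndep (I : α → α → Prop) (u v : List α) : Prop :=
  ∀ a ∈ u, ∀ b ∈ v, I a b

/-- Trace equivalence: the least equivalence relation on words containing
all pairs (x ++ [a,b] ++ y, x ++ [b,a] ++ y) with a I b. -/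
inductive TrEq (I : α → α → Prop) : List α → List α → Prop
  | swap (x y : List α) {a b : α} : I a b → TrEq I (x ++ [a, b] ++ y) (x ++ [b, a] ++ y)
  | refl (u : List α) : TrEq I u u
  | symm {u v : List α} : TrEq I u v → TrEq I v u
  | trans {u v w : List α} : TrEq I u v → TrEq I v w → TrEq I u w

/-- Trace closure of a language. -/
def TrClosure (I : α → α → Prop) (L : Set (List α)) : Set (List α) :=
  {w | ∃ z ∈ L, TrEq I w z}

/-- u ⊲ z ⊳ v with exactly n blocks of u: there are nonempty words u₁,…,uₙ and
words v₀,…,vₙ (with v₁,…,v_{n-1} nonempty) such that u = u₁⋯uₙ, v = v₀⋯vₙ,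
z = v₀u₁v₁⋯uₙvₙ and vⱼ I uᵢ whenever j < i. -/
def ScatN (I : α → α → Prop) (n : ℕ) (u z v : List α) : Prop :=
  ∃ us vs : ℕ → List α,
    (∀ i, 1 ≤ i → i ≤ n → us i ≠ []) ∧
    (∀ j, 1 ≤ j → j ≤ n - 1 → vs j ≠ []) ∧
    u = ((List.range n).map (fun i => us (i + 1))).flatten ∧
    v = ((List.range (n + 1)).map vs).flatten ∧
    z = vs 0 ++ ((List.range n).map (fun i => us (i + 1) ++ vs (i + 1))).flatten ∧
    (∀ i j, 1 ≤ i → i ≤ n → j < i → WIndep I (vs j) (us i))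

/-- u ⊲ z ⊳ v -/
def Scat (I : α → α → Prop) (u z v : List α) : Prop :=
  ∃ n, ScatN I n u z v

/-- u ∼⊲ z ⊳ v -/
def EqScat (I : α → α → Prop) (u z v : List α) : Prop :=
  ∃ u', TrEq I u u' ∧ Scat I u' z v

/-- u ∼⊲ z ⊳∼ v -/
def EqScatEq (I : α → α → Prop) (u z v : List α) : Prop :=
  ∃ u' v', TrEq I u u' ∧ Scat I u' z v' ∧ TrEq I v' v

/-- u ∼⊲_N z ⊳∼ v : as EqScatEq, with the number of blocks bounded by N -/
def EqScatEqLe (I : α → α → Prop) (N : ℕ) (u z v : List α) : Prop :=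
  ∃ u' v', TrEq I u u' ∧ (∃ n ≤ N, ScatN I n u' z v') ∧ TrEq I v' v

/-- Reordering concatenation of words. -/
def rconc (I : α → α → Prop) : List α → List α → Set (List α)
  | [], v => {v}
  | a :: u, [] => {a :: u}
  | a :: u, b :: v =>
      (List.cons a) '' rconc I u (b :: v) ∪
      {z | WIndep I (a :: u) [b] ∧ ∃ w ∈ rconc I (a :: u) v, z = b :: w}
termination_by u v => u.length + v.length

/-- Reordering concatenation lifted to languages. -/
def rconcL (I : α → α → Prop) (L L' : Set (List α)) : Set (List α) :=
  {z | ∃ u ∈ L, ∃ v ∈ L', z ∈ rconc I u v}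

/-- The reorderable part of a language w.r.t. a word. -/
def RPart (I : α → α → Prop) (u : List α) (L : Set (List α)) : Set (List α) :=
  {v ∈ L | WIndep I v u}

/-- The reordering derivative of a language along a word. -/
def RDeriv (I : α → α → Prop) (u : List α) (L : Set (List α)) : Set (List α) :=
  {v | ∃ z ∈ L, EqScat I u z v}

/-- Syntactic reorderable part of a regexp w.r.t. a letter. -/
noncomputable def Rexp (I : α → α → Prop) (a : α) : RegularExpression α → RegularExpression α
  | zero => zero
  | epsilon => epsilon
  | char b => if I a b then char b else zero
  | plus E F => plus (Rexp I a E) (Rexp I a F)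
  | comp E F => comp (Rexp I a E) (Rexp I a F)
  | RegularExpression.star E => star (Rexp I a E)

/-- Brzozowski reordering derivative of a regexp along a letter. -/
noncomputable def Dexp (I : α → α → Prop) (a : α) : RegularExpression α → RegularExpression α
  | zero => zero
  | epsilon => zero
  | char b => if a = b then epsilon else zero
  | plus E F => plus (Dexp I a E) (Dexp I a F)
  | comp E F => plus (comp (Dexp I a E) F) (comp (Rexp I a E) (Dexp I a F))
  | RegularExpression.star E => comp (star (Rexp I a E)) (comp (Dexp I a E) (star E))

/-- Syntactic reorderable part along a word. -/
noncomputable def RexpW (I : α → α → Prop) (u : List α) (E : RegularExpression α) :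
    RegularExpression α :=
  u.foldl (fun E a => Rexp I a E) E

/-- Brzozowski reordering derivative along a word. -/
noncomputable def DexpW (I : α → α → Prop) (u : List α) (E : RegularExpression α) :
    RegularExpression α :=
  u.foldl (fun E a => Dexp I a E) E

/-- Antimirov reordering parts-of-derivatives along a letter. -/
inductive Antim (I : α → α → Prop) : RegularExpression α → α → RegularExpression α → Prop
  | chr (a : α) : Antim I (char a) a epsilon
  | plusL {E F : RegularExpression α} {a E'} : Antim I E a E' → Antim I (plus E F) a E'
  | plusR {E F : RegularExpression α} {a F'} : Antim I F a F' → Antim I (plus E F) a F'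
  | compL {E F : RegularExpression α} {a E'} : Antim I E a E' → Antim I (comp E F) a (comp E' F)
  | compR {E F : RegularExpression α} {a F'} :
      Antim I F a F' → Antim I (comp E F) a (comp (Rexp I a E) F')
  | st {E : RegularExpression α} {a E'} :
      Antim I E a E' → Antim I (star E) a (comp (star (Rexp I a E)) (comp E' (star E)))

/-- Antimirov reordering parts-of-derivatives along a word. -/
inductive AntimW (I : α → α → Prop) : RegularExpression α → List α → RegularExpression α → Prop
  | nil (E : RegularExpression α) : AntimW I E [] E
  | snoc {E : RegularExpression α} {u E' a E''} :
      AntimW I E u E' → Antim I E' a E'' → AntimW I E (u ++ [a]) E''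

/-- The dependence graph of a word: vertices are positions; distinct positions
are adjacent when their letters are not independent. -/
def depGraph (I : α → α → Prop) (w : List α) : SimpleGraph (Fin w.length) where
  Adj i j := i ≠ j ∧ ¬(I (w.get i) (w.get j) ∧ I (w.get j) (w.get i))
  symm := by
    constructor
    intro i j h
    exact ⟨h.1.symm, fun hc => h.2 ⟨hc.2, hc.1⟩⟩
  loopless := by
    constructor
    intro i h
    exact h.1 rfl

/-- A word is connected if its dependence graph is connected. -/
def WordConnected (I : α → α → Prop) (w : List α) : Prop :=
  (depGraph I w).Preconnected

/-- Least fixed point star for the trace-closing semantics. -/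
def starI (I : α → α → Prop) (L : Set (List α)) : Set (List α) :=
  sInf {X | {([] : List α)} ∪ rconcL I L X ⊆ X}

/-- Trace-closing semantics of regular expressions. -/
def langI (I : α → α → Prop) : RegularExpression α → Set (List α)
  | zero => ∅
  | epsilon => {[]}
  | char a => {[a]}
  | plus E F => langI I E ∪ langI I F
  | comp E F => rconcL I (langI I E) (langI I F)
  | RegularExpression.star E => starI I (langI I E)

/-- L has (scattering) rank at most N. -/
def HasRankLe (I : α → α → Prop) (L : Set (List α)) (N : ℕ) : Prop :=
  ∀ u v, u ++ v ∈ TrClosure I L → ∃ z ∈ L, EqScatEqLe I N u z v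

/-- L has uniform (scattering) rank at most N. -/
def HasUniformRankLe (I : α → α → Prop) (L : Set (List α)) (N : ℕ) : Prop :=
  ∀ w ∈ TrClosure I L, ∃ z ∈ L, ∀ u v, w = u ++ v → EqScatEqLe I N u z v

/-- Star-connected regular expressions. -/
inductive StarConnected (I : α → α → Prop) : RegularExpression α → Prop
  | zero : StarConnected I zero
  | epsilon : StarConnected I epsilon
  | chr (a : α) : StarConnected I (char a)
  | plus {E F : RegularExpression α} :
      StarConnected I E → StarConnected I F → StarConnected I (plus E F)
  | comp {E F : RegularExpression α} :
      StarConnected I E → StarConnected I F → StarConnected I (comp E F)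
  | st {E : RegularExpression α} :
      StarConnected I E → (∀ w ∈ E.matches', WordConnected I w) → StarConnected I (star E)

/-- Refined Antimirov reordering parts-of-derivatives along a letter. -/
inductive RAntim (I : α → α → Prop) :
    RegularExpression α → α → RegularExpression α → RegularExpression α → Prop
  | chr (a : α) : RAntim I (char a) a epsilon epsilon
  | plusL {E F : RegularExpression α} {a El Er} :
      RAntim I E a El Er → RAntim I (plus E F) a El Er
  | plusR {E F : RegularExpression α} {a Fl Fr} :
      RAntim I F a Fl Fr → RAntim I (plus E F) a Fl Fr
  | compL {E F : RegularExpression α} {a El Er} :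
      RAntim I E a El Er → RAntim I (comp E F) a El (comp Er F)
  | compR {E F : RegularExpression α} {a Fl Fr} :
      RAntim I F a Fl Fr → RAntim I (comp E F) a (comp (Rexp I a E) Fl) Fr
  | st {E : RegularExpression α} {a El Er} :
      RAntim I E a El Er →
      RAntim I (star E) a (comp (star (Rexp I a E)) El) (comp Er (star E))

/-- Refined Antimirov relation lifted to nonempty lists of regexps (unbounded). -/
inductive RAntimL (I : α → α → Prop) :
    List (RegularExpression α) → α → List (RegularExpression α) → Prop
  | split {Γ Δ : List (RegularExpression α)} {E : RegularExpression α} {a El Er} :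
      RAntim I E a El Er →
      RAntimL I (Γ ++ E :: Δ) a (Γ.map (Rexp I a) ++ El :: Er :: Δ)
  | dropL {Γ Δ : List (RegularExpression α)} {E : RegularExpression α} {a El Er} :
      RAntim I E a El Er → [] ∈ El.matches' → Γ ≠ [] →
      RAntimL I (Γ ++ E :: Δ) a (Γ.map (Rexp I a) ++ Er :: Δ)
  | dropR {Γ Δ : List (RegularExpression α)} {E : RegularExpression α} {a El Er} :
      RAntim I E a El Er → [] ∈ Er.matches' → Δ ≠ [] →
      RAntimL I (Γ ++ E :: Δ) a (Γ.map (Rexp I a) ++ El :: Δ)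
  | dropBoth {Γ Δ : List (RegularExpression α)} {E : RegularExpression α} {a El Er} :
      RAntim I E a El Er → [] ∈ El.matches' → [] ∈ Er.matches' → Γ ≠ [] → Δ ≠ [] →
      RAntimL I (Γ ++ E :: Δ) a (Γ.map (Rexp I a) ++ Δ)

/-- Refined Antimirov relation along a word (unbounded). -/
inductive RAntimW (I : α → α → Prop) :
    RegularExpression α → List α → List (RegularExpression α) → Prop
  | nil (E : RegularExpression α) : RAntimW I E [] [E]
  | snoc {E : RegularExpression α} {u Γ a Γ'} :
      RAntimW I E u Γ → RAntimL I Γ a Γ' → RAntimW I E (u ++ [a]) Γ'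

/-- N-bounded refined Antimirov relation lifted to nonempty lists of regexps. -/
inductive RAntimLN (I : α → α → Prop) (N : ℕ) :
    List (RegularExpression α) → α → List (RegularExpression α) → Prop
  | split {Γ Δ : List (RegularExpression α)} {E : RegularExpression α} {a El Er} :
      RAntim I E a El Er → Γ.length + Δ.length < N →
      RAntimLN I N (Γ ++ E :: Δ) a (Γ.map (Rexp I a) ++ El :: Er :: Δ)
  | dropL {Γ Δ : List (RegularExpression α)} {E : RegularExpression α} {a El Er} :
      RAntim I E a El Er → [] ∈ El.matches' → Γ ≠ [] →
      RAntimLN I N (Γ ++ E :: Δ) a (Γ.map (Rexp I a) ++ Er :: Δ)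
  | dropR {Γ Δ : List (RegularExpression α)} {E : RegularExpression α} {a El Er} :
      RAntim I E a El Er → [] ∈ Er.matches' → Δ ≠ [] →
      RAntimLN I N (Γ ++ E :: Δ) a (Γ.map (Rexp I a) ++ El :: Δ)
  | dropBoth {Γ Δ : List (RegularExpression α)} {E : RegularExpression α} {a El Er} :
      RAntim I E a El Er → [] ∈ El.matches' → [] ∈ Er.matches' → Γ ≠ [] → Δ ≠ [] →
      RAntimLN I N (Γ ++ E :: Δ) a (Γ.map (Rexp I a) ++ Δ)

/-- N-bounded refined Antimirov relation along a word. -/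
inductive RAntimWN (I : α → α → Prop) (N : ℕ) :
    RegularExpression α → List α → List (RegularExpression α) → Prop
  | nil (E : RegularExpression α) : RAntimWN I N E [] [E]
  | snoc {E : RegularExpression α} {u Γ a Γ'} :
      RAntimWN I N E u Γ → RAntimLN I N Γ a Γ' → RAntimWN I N E (u ++ [a]) Γ'


section Aux18

variable {I : α → α → Prop}

open RegularExpression

theorem TrEq.append_left' (w : List α) {u v : List α} (h : TrEq I u v) :
    TrEq I (w ++ u) (w ++ v) := by
  induction h with
  | swap x y hab => simpa [List.append_assoc] using TrEq.swap (I := I) (w ++ x) y hab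
  | refl u => exact TrEq.refl _
  | symm _ ih => exact ih.symm
  | trans _ _ ih1 ih2 => exact ih1.trans ih2

theorem TrEq.cons' (b : α) {u v : List α} (h : TrEq I u v) : TrEq I (b :: u) (b :: v) :=
  h.append_left' [b]

theorem TrEq.length_eq' {u v : List α} (h : TrEq I u v) : u.length = v.length := by
  induction h with
  | swap x y hab => simp
  | refl u => rfl
  | symm _ ih => exact ih.symm
  | trans _ _ ih1 ih2 => exact ih1.trans ih2

/-- Pull an independent letter through a word. -/
theorem treq_pull {a : α} : ∀ (w : List α), (∀ b ∈ w, I a b) → ∀ r,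
    TrEq I (a :: (w ++ r)) (w ++ a :: r)
  | [], _, r => TrEq.refl _
  | b :: w, h, r => by
    have h1 : TrEq I (a :: b :: (w ++ r)) (b :: a :: (w ++ r)) := by
      simpa using TrEq.swap (I := I) [] (w ++ r) (h b (by simp))
    exact h1.trans ((treq_pull w (fun c hc => h c (by simp [hc])) r).cons' b)

theorem mem_rexp_iff {a : α} (E : RegularExpression α) : ∀ (w : List α),
    w ∈ (Rexp I a E).matches' ↔ w ∈ E.matches' ∧ ∀ b ∈ w, I a b := by
  induction E with
  | zero => intro w; simp [Rexp]
  | epsilon =>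
    intro w
    constructor
    · rintro h; refine ⟨h, ?_⟩
      simp only [Rexp, one_def, matches'_epsilon, Language.mem_one] at h
      subst h; simp
    · rintro ⟨h, _⟩; exact h
  | char c =>
    intro w
    by_cases h : I a c
    · simp only [Rexp, if_pos h, matches'_char, Set.mem_singleton_iff]
      constructor
      · rintro rfl; exact ⟨rfl, by simpa using h⟩
      · rintro ⟨rfl, _⟩; rfl
    · simp only [Rexp, if_neg h, zero_def, matches'_zero]
      constructor
      · rintro h'; exact absurd h' (Language.notMem_zero w)
      · rintro ⟨hw, hind⟩
        simp only [matches'_char, Set.mem_singleton_iff] at hw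
        subst hw
        exact absurd (hind c (by simp)) h
  | plus E F ihE ihF =>
    intro w
    simp only [Rexp, plus_def, matches'_add, Language.mem_add, ihE, ihF]
    tauto
  | comp E F ihE ihF =>
    intro w
    simp only [Rexp, comp_def, matches'_mul, Language.mem_mul]
    constructor
    · rintro ⟨x, hx, y, hy, rfl⟩
      rcases (ihE x).1 hx with ⟨hx1, hx2⟩
      rcases (ihF y).1 hy with ⟨hy1, hy2⟩
      refine ⟨⟨x, hx1, y, hy1, rfl⟩, ?_⟩
      intro b hb
      rcases List.mem_append.1 hb with h | h
      · exact hx2 b h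
      · exact hy2 b h
    · rintro ⟨⟨x, hx, y, hy, rfl⟩, hind⟩
      exact ⟨x, (ihE x).2 ⟨hx, fun b hb => hind b (by simp [hb])⟩,
        y, (ihF y).2 ⟨hy, fun b hb => hind b (by simp [hb])⟩, rfl⟩
  | star E ih =>
    intro w
    simp only [Rexp, matches'_star, Language.mem_kstar]
    constructor
    · rintro ⟨S, rfl, hS⟩
      refine ⟨⟨S, rfl, fun y hy => ((ih y).1 (hS y hy)).1⟩, ?_⟩
      intro b hb
      rcases List.mem_flatten.1 hb with ⟨y, hy, hby⟩
      exact ((ih y).1 (hS y hy)).2 b hby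
    · rintro ⟨⟨S, rfl, hS⟩, hind⟩
      exact ⟨S, rfl, fun y hy => (ih y).2
        ⟨hS y hy, fun b hb => hind b (List.mem_flatten.2 ⟨y, hy, hb⟩)⟩⟩


theorem flatten_split {a : α} : ∀ (S : List (List α)) {x y : List α},
    S.flatten = x ++ a :: y →
    ∃ S₁ q r S₂, S = S₁ ++ (q ++ a :: r) :: S₂ ∧ x = S₁.flatten ++ q ∧ y = r ++ S₂.flatten := by
  intro S
  induction S with
  | nil => intro x y h; simp at h
  | cons t S ih =>
    intro x y h
    simp only [List.flatten_cons] at h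
    rcases List.append_eq_append_iff.1 h with ⟨m, hm1, hm2⟩ | ⟨m, hm1, hm2⟩
    · obtain ⟨S₁, q, r, S₂, h1, h2, h3⟩ := ih hm2
      refine ⟨t :: S₁, q, r, S₂, by simp [h1], ?_, h3⟩
      simp [hm1, h2, List.append_assoc]
    · rcases m with _ | ⟨a', m'⟩
      · simp only [List.nil_append] at hm2
        have hx : x = t := by simpa using hm1.symm
        subst hx
        obtain ⟨S₁, q, r, S₂, h1, h2, h3⟩ := ih (x := []) (y := y) (by simp [← hm2])
        obtain ⟨hq1, hq2⟩ := List.append_eq_nil_iff.1 h2.symm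
        refine ⟨x :: S₁, q, r, S₂, by simp [h1], ?_, h3⟩
        simp [List.flatten_cons, hq1, hq2]
      · simp only [List.cons_append] at hm2
        injection hm2 with ha hy
        subst ha
        refine ⟨[], x, m', S, ?_, by simp, hy⟩
        simp [hm1]

theorem rantim_sound {a : α} {E El Er : RegularExpression α} (h : RAntim I E a El Er) :
    ∀ {vl vr : List α}, vl ∈ El.matches' → vr ∈ Er.matches' →
      (vl ++ a :: vr ∈ E.matches' ∧ ∀ b ∈ vl, I a b) := by
  induction h with
  | chr c =>
    intro vl vr hl hr
    simp only [one_def, matches'_epsilon, Language.mem_one] at hl hr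
    subst hl; subst hr
    refine ⟨?_, by simp⟩
    simp only [List.nil_append, matches'_char]
    rfl
  | plusL h ih =>
    intro vl vr hl hr
    obtain ⟨h1, h2⟩ := ih hl hr
    exact ⟨by simp only [plus_def, matches'_add, Language.mem_add]; exact Or.inl h1, h2⟩
  | plusR h ih =>
    intro vl vr hl hr
    obtain ⟨h1, h2⟩ := ih hl hr
    exact ⟨by simp only [plus_def, matches'_add, Language.mem_add]; exact Or.inr h1, h2⟩
  | @compL E' F' b El' Er' h ih =>
    intro vl vr hl hr
    simp only [comp_def, matches'_mul, Language.mem_mul] at hr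
    obtain ⟨x, hx, y, hy, rfl⟩ := hr
    obtain ⟨h1, h2⟩ := ih hl hx
    refine ⟨?_, h2⟩
    simp only [comp_def, matches'_mul, Language.mem_mul]
    exact ⟨vl ++ b :: x, h1, y, hy, by simp [List.append_assoc]⟩
  | @compR E' F' b Fl' Fr' h ih =>
    intro vl vr hl hr
    simp only [comp_def, matches'_mul, Language.mem_mul] at hl
    obtain ⟨e, he, l, hl', rfl⟩ := hl
    obtain ⟨he1, he2⟩ := (mem_rexp_iff _ e).1 he
    obtain ⟨h1, h2⟩ := ih hl' hr
    constructor
    · simp only [comp_def, matches'_mul, Language.mem_mul]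
      exact ⟨e, he1, l ++ b :: vr, h1, by simp [List.append_assoc]⟩
    · intro b hb
      rcases List.mem_append.1 hb with h | h
      · exact he2 b h
      · exact h2 b h
  | @st E' b El' Er' h ih =>
    intro vl vr hl hr
    simp only [comp_def, matches'_mul, Language.mem_mul] at hl hr
    obtain ⟨w, hw, l, hl', rfl⟩ := hl
    obtain ⟨r, hr', t, ht, rfl⟩ := hr
    obtain ⟨h1, h2⟩ := ih hl' hr'
    simp only [matches'_star, Language.mem_kstar] at hw ht ⊢
    obtain ⟨S, rfl, hS⟩ := hw
    obtain ⟨T, rfl, hT⟩ := ht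
    constructor
    · refine ⟨S ++ (l ++ b :: r) :: T, ?_, ?_⟩
      · simp [List.flatten_append, List.append_assoc]
      · intro y hy
        rcases List.mem_append.1 hy with h | h
        · exact ((mem_rexp_iff _ y).1 (hS y h)).1
        · rcases List.mem_cons.1 h with rfl | h
          · exact h1
          · exact hT y h
    · intro b hb
      rcases List.mem_append.1 hb with h | h
      · rcases List.mem_flatten.1 h with ⟨y, hy, hby⟩
        exact ((mem_rexp_iff _ y).1 (hS y hy)).2 b hby
      · exact h2 b h

theorem rantim_complete {a : α} : ∀ {E : RegularExpression α} {p s : List α},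
    p ++ a :: s ∈ E.matches' → (∀ b ∈ p, I a b) →
    ∃ El Er, RAntim I E a El Er ∧ p ∈ El.matches' ∧ s ∈ Er.matches' := by
  intro E
  induction E with
  | zero => intro p s h _; exact absurd h (Language.notMem_zero _)
  | epsilon => intro p s h _; simp [one_def, matches'_epsilon, Language.mem_one] at h
  | char c =>
    intro p s h _
    have h' : p ++ a :: s = [c] := h
    have hp : p = [] ∧ a = c ∧ s = [] := by
      rcases p with _ | ⟨b, p'⟩
      · simp only [List.nil_append, List.cons.injEq] at h'
        exact ⟨rfl, h'.1, h'.2⟩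
      · exfalso
        have := congrArg List.length h'
        simp at this
    obtain ⟨rfl, rfl, rfl⟩ := hp
    exact ⟨epsilon, epsilon, RAntim.chr _,
      by simp [one_def, matches'_epsilon, Language.mem_one],
      by simp [one_def, matches'_epsilon, Language.mem_one]⟩
  | plus E F ihE ihF =>
    intro p s h hind
    simp only [plus_def, matches'_add, Language.mem_add] at h
    rcases h with h | h
    · obtain ⟨El, Er, h1, h2, h3⟩ := ihE h hind
      exact ⟨El, Er, RAntim.plusL h1, h2, h3⟩
    · obtain ⟨Fl, Fr, h1, h2, h3⟩ := ihF h hind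
      exact ⟨Fl, Fr, RAntim.plusR h1, h2, h3⟩
  | comp E F ihE ihF =>
    intro p s h hind
    simp only [comp_def, matches'_mul, Language.mem_mul] at h
    obtain ⟨e, he, f, hf, hef⟩ := h
    rcases List.append_eq_append_iff.1 hef with ⟨m, hm1, hm2⟩ | ⟨m, hm1, hm2⟩
    · -- hm1 : p = e ++ m, hm2 : f = m ++ a :: s
      have hm : ∀ b ∈ m, I a b := fun b hb => hind b (hm1 ▸ List.mem_append_right _ hb)
      obtain ⟨Fl, Fr, h1, h2, h3⟩ := ihF (hm2 ▸ hf) hm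
      refine ⟨comp (Rexp I a E) Fl, Fr, RAntim.compR h1, ?_, h3⟩
      simp only [comp_def, matches'_mul, Language.mem_mul]
      exact ⟨e, (mem_rexp_iff _ e).2 ⟨he, fun b hb => hind b (hm1 ▸ List.mem_append_left _ hb)⟩,
        m, h2, hm1.symm⟩
    · -- hm1 : e = p ++ m, hm2 : a :: s = m ++ f
      rcases m with _ | ⟨a', m'⟩
      · simp only [List.nil_append] at hm2
        have hpe : e = p := by simpa using hm1
        obtain ⟨Fl, Fr, h1, h2, h3⟩ := ihF (p := []) (by simpa [← hm2] using hf) (by simp)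
        refine ⟨comp (Rexp I a E) Fl, Fr, RAntim.compR h1, ?_, h3⟩
        simp only [comp_def, matches'_mul, Language.mem_mul]
        exact ⟨p, (mem_rexp_iff _ p).2 ⟨hpe ▸ he, hind⟩, [], h2, by simp⟩
      · simp only [List.cons_append] at hm2
        injection hm2 with ha hs
        subst ha
        obtain ⟨El, Er, h1, h2, h3⟩ := ihE (by rw [← hm1]; exact he) hind
        refine ⟨El, comp Er F, RAntim.compL h1, h2, ?_⟩
        simp only [comp_def, matches'_mul, Language.mem_mul]
        exact ⟨m', h3, f, hf, hs.symm⟩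
  | star E ih =>
    intro p s h hind
    simp only [matches'_star, Language.mem_kstar] at h
    obtain ⟨S, hS, hSmem⟩ := h
    obtain ⟨S₁, q, r, S₂, h1, h2, h3⟩ := flatten_split S hS.symm
    have hq : ∀ b ∈ q, I a b := fun b hb => hind b (by rw [h2]; exact List.mem_append_right _ hb)
    have hmem : q ++ a :: r ∈ E.matches' :=
      hSmem _ (by rw [h1]; exact List.mem_append_right _ (by simp))
    obtain ⟨El, Er, hRA, hEl, hEr⟩ := ih hmem hq
    refine ⟨comp (star (Rexp I a E)) El, comp Er (star E), RAntim.st hRA, ?_, ?_⟩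
    · simp only [comp_def, matches'_mul, Language.mem_mul]
      refine ⟨S₁.flatten, ?_, q, hEl, h2.symm⟩
      simp only [matches'_star]
      refine Language.join_mem_kstar ?_
      intro y hy
      refine (mem_rexp_iff _ y).2 ⟨hSmem y (by rw [h1]; exact List.mem_append_left _ hy), ?_⟩
      intro b hb
      exact hind b (by rw [h2]; exact List.mem_append_left _ (List.mem_flatten.2 ⟨y, hy, hb⟩))
    · simp only [comp_def, matches'_mul, Language.mem_mul]
      refine ⟨r, hEr, S₂.flatten, ?_, h3.symm⟩
      simp only [matches'_star]
      exact Language.join_mem_kstar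
        (fun y hy => hSmem y (by rw [h1]; exact List.mem_append_right _ (by simp [hy])))

/-- Machine steps from an arbitrary configuration, consuming letters from the front. -/
inductive Steps (I : α → α → Prop) :
    List (RegularExpression α) → List α → List (RegularExpression α) → Prop
  | nil (Γ) : Steps I Γ [] Γ
  | cons {Γ a Γ' u Γ''} : RAntimL I Γ a Γ' → Steps I Γ' u Γ'' → Steps I Γ (a :: u) Γ''

theorem rantimw_append {E : RegularExpression α} {u Γ v Γ'}
    (h : RAntimW I E u Γ) (h2 : Steps I Γ v Γ') : RAntimW I E (u ++ v) Γ' := by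
  induction h2 generalizing u with
  | nil Γ => simpa using h
  | cons hstep hrest ih =>
    have := ih (RAntimW.snoc h hstep)
    simpa [List.append_assoc] using this

theorem rantimw_of_steps {E : RegularExpression α} {u Γ}
    (h : Steps I [E] u Γ) : RAntimW I E u Γ := by
  simpa using rantimw_append (RAntimW.nil E) h

theorem rantimL_len {Γ : List (RegularExpression α)} {a Γ'}
    (h : RAntimL I Γ a Γ') : 2 ≤ Γ'.length := by
  cases h with
  | split h => simp; omega
  | @dropL Γ₀ Δ F b El Er h h1 h2 =>
    have := List.length_pos_iff.2 h2
    simp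
    omega
  | @dropR Γ₀ Δ F b El Er h h1 h2 =>
    have := List.length_pos_iff.2 h2
    simp
    omega
  | @dropBoth Γ₀ Δ F b El Er h h1 h2 h3 h4 =>
    have := List.length_pos_iff.2 h3
    have := List.length_pos_iff.2 h4
    simp
    omega

theorem steps_len {Γ : List (RegularExpression α)} {u Γ'}
    (h : Steps I Γ u Γ') (hu : u ≠ []) : 2 ≤ Γ'.length := by
  induction h with
  | nil => exact absurd rfl hu
  | cons hstep hrest ih =>
    rcases hrest with _ | ⟨hstep2, hrest2⟩
    · exact rantimL_len hstep
    · exact ih (by simp)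

theorem forall2_split {β γ : Type*} {R : β → γ → Prop} :
    ∀ {A : List γ} {B vs}, List.Forall₂ R vs (A ++ B) →
    ∃ v1 v2, vs = v1 ++ v2 ∧ List.Forall₂ R v1 A ∧ List.Forall₂ R v2 B := by
  intro A
  induction A with
  | nil => intro B vs h; exact ⟨[], vs, by simp, List.Forall₂.nil, h⟩
  | cons G A' ih =>
    intro B vs h
    rw [List.cons_append] at h
    rcases List.forall₂_cons_right_iff.1 h with ⟨v, vs', hv, hrest, rfl⟩
    obtain ⟨v1, v2, rfl, h1, h2⟩ := ih hrest
    exact ⟨v :: v1, v2, by simp, List.Forall₂.cons hv h1, h2⟩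

theorem forall2_mem_right {β γ : Type*} {R : β → γ → Prop} :
    ∀ {vs : List β} {Γ : List γ}, List.Forall₂ R vs Γ → ∀ G ∈ Γ, ∃ v ∈ vs, R v G := by
  intro vs Γ h
  induction h with
  | nil => intro G hG; simp at hG
  | cons hv hrest ih =>
    intro G hG
    rcases List.mem_cons.1 hG with rfl | hG
    · exact ⟨_, by simp, hv⟩
    · obtain ⟨v, hv', hR⟩ := ih G hG
      exact ⟨v, by simp [hv'], hR⟩

theorem forall2_indep {a : α} : ∀ {ws : List (List α)} {Γl : List (RegularExpression α)},
    List.Forall₂ (fun v G => v ∈ (Rexp I a G).matches') ws Γl →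
    ∀ c ∈ ws.flatten, I a c := by
  intro ws Γl h
  induction h with
  | nil => simp
  | cons hv hrest ih =>
    intro c hc
    rw [List.flatten_cons] at hc
    rcases List.mem_append.1 hc with hc' | hc'
    · exact ((mem_rexp_iff _ _).1 hv).2 c hc'
    · exact ih c hc'

/-- Soundness of the refined Antimirov machine. -/
theorem rantimw_sound {E : RegularExpression α} :
    ∀ {u : List α} {Γ}, RAntimW I E u Γ →
    ∀ {vs : List (List α)}, List.Forall₂ (fun v G => v ∈ G.matches') vs Γ →
    ∃ z ∈ E.matches', TrEq I (u ++ vs.flatten) z := by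
  intro u Γ h
  induction h with
  | nil =>
    intro vs hvs
    rcases List.forall₂_cons_right_iff.1 hvs with ⟨v, vs', hv, hrest, rfl⟩
    rcases List.forall₂_nil_right_iff.1 hrest
    exact ⟨v, hv, by simpa using TrEq.refl v⟩
  | @snoc u' Γ₀ a Γ' hw hstep ih =>
    intro vs' hvs'
    have key : ∃ vs, List.Forall₂ (fun v G => v ∈ G.matches') vs Γ₀ ∧
        TrEq I ((u' ++ [a]) ++ vs'.flatten) (u' ++ vs.flatten) := by
      cases hstep with
      | @split Γl Δ F b El Er hRA =>
        obtain ⟨ws, rest, rfl, hws, hrest⟩ := forall2_split hvs'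
        rcases List.forall₂_cons_right_iff.1 hrest with ⟨vl, rest2, hvl, hrest2, rfl⟩
        rcases List.forall₂_cons_right_iff.1 hrest2 with ⟨vr, us, hvr, hus, rfl⟩
        have hws' : List.Forall₂ (fun v G => v ∈ (Rexp I a G).matches') ws Γl :=
          List.forall₂_map_right_iff.1 hws
        have hsound := rantim_sound hRA hvl hvr
        refine ⟨ws ++ (vl ++ a :: vr) :: us, ?_, ?_⟩
        · exact List.rel_append
            (List.Forall₂.imp (fun v G h => ((mem_rexp_iff G v).1 h).1) hws')
            (List.Forall₂.cons hsound.1 hus)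
        · have hW : ∀ c ∈ ws.flatten ++ vl, I a c := by
            intro c hc
            rcases List.mem_append.1 hc with h | h
            · exact forall2_indep hws' c h
            · exact hsound.2 c h
          have hpull := (treq_pull (ws.flatten ++ vl) hW (vr ++ us.flatten)).append_left' u'
          simpa [List.append_assoc] using hpull
      | @dropL Γl Δ F b El Er hRA h1 h2 =>
        obtain ⟨ws, rest, rfl, hws, hrest⟩ := forall2_split hvs'
        rcases List.forall₂_cons_right_iff.1 hrest with ⟨vr, us, hvr, hus, rfl⟩
        have hws' : List.Forall₂ (fun v G => v ∈ (Rexp I a G).matches') ws Γl :=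
          List.forall₂_map_right_iff.1 hws
        have hsound := rantim_sound hRA h1 hvr
        refine ⟨ws ++ (a :: vr) :: us, ?_, ?_⟩
        · refine List.rel_append
            (List.Forall₂.imp (fun v G h => ((mem_rexp_iff G v).1 h).1) hws')
            (List.Forall₂.cons (by simpa using hsound.1) hus)
        · have hW : ∀ c ∈ ws.flatten, I a c := forall2_indep hws'
          have hpull := (treq_pull ws.flatten hW (vr ++ us.flatten)).append_left' u'
          simpa [List.append_assoc] using hpull
      | @dropR Γl Δ F b El Er hRA h1 h2 =>
        obtain ⟨ws, rest, rfl, hws, hrest⟩ := forall2_split hvs'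
        rcases List.forall₂_cons_right_iff.1 hrest with ⟨vl, us, hvl, hus, rfl⟩
        have hws' : List.Forall₂ (fun v G => v ∈ (Rexp I a G).matches') ws Γl :=
          List.forall₂_map_right_iff.1 hws
        have hsound := rantim_sound hRA hvl h1
        refine ⟨ws ++ (vl ++ [a]) :: us, ?_, ?_⟩
        · refine List.rel_append
            (List.Forall₂.imp (fun v G h => ((mem_rexp_iff G v).1 h).1) hws')
            (List.Forall₂.cons (by simpa using hsound.1) hus)
        · have hW : ∀ c ∈ ws.flatten ++ vl, I a c := by
            intro c hc
            rcases List.mem_append.1 hc with h | h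
            · exact forall2_indep hws' c h
            · exact hsound.2 c h
          have hpull := (treq_pull (ws.flatten ++ vl) hW us.flatten).append_left' u'
          simpa [List.append_assoc] using hpull
      | @dropBoth Γl Δ F b El Er hRA h1 h2 h3 h4 =>
        obtain ⟨ws, us, rfl, hws, hus⟩ := forall2_split hvs'
        have hws' : List.Forall₂ (fun v G => v ∈ (Rexp I a G).matches') ws Γl :=
          List.forall₂_map_right_iff.1 hws
        have hsound := rantim_sound hRA h1 h2
        refine ⟨ws ++ [a] :: us, ?_, ?_⟩
        · refine List.rel_append
            (List.Forall₂.imp (fun v G h => ((mem_rexp_iff G v).1 h).1) hws')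
            (List.Forall₂.cons (by simpa using hsound.1) hus)
        · have hW : ∀ c ∈ ws.flatten, I a c := forall2_indep hws'
          have hpull := (treq_pull ws.flatten hW us.flatten).append_left' u'
          simpa [List.append_assoc] using hpull
    obtain ⟨vs, hvs, hkey⟩ := key
    obtain ⟨z, hz, hz2⟩ := ih hvs
    exact ⟨z, hz, hkey.trans hz2⟩

/-- All internal entries (not first, not last) are nonempty. -/
def IntNE (ts : List (List α)) : Prop :=
  ∀ i (t : List α), 0 < i → i + 1 < ts.length → ts[i]? = some t → t ≠ []

theorem intNE_singleton (t : List α) : IntNE [t] := by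
  intro i x hi hlen _
  exfalso
  simp only [List.length_cons, List.length_nil] at hlen
  omega

theorem IntNE.le_two {ts : List (List α)} (h : IntNE ts) (hall : ∀ t ∈ ts, t = []) :
    ts.length ≤ 2 := by
  by_contra hlen
  push_neg at hlen
  have hx : (1 : ℕ) < ts.length := by omega
  have h1 : ts[1]? = some (ts[1]'hx) := List.getElem?_eq_getElem hx
  exact h 1 (ts[1]'hx) (by omega) (by omega) h1 (hall _ (List.getElem_mem hx))

theorem intNE_two {l r : List (List α)} {m p s : List α}
    (h : IntNE (l ++ m :: r)) (hp : p ≠ [] ∨ l = []) (hs : s ≠ [] ∨ r = []) :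
    IntNE (l ++ p :: s :: r) := by
  intro i t hi hlen hget
  simp only [List.length_append, List.length_cons] at hlen
  by_cases hil : i < l.length
  · rw [List.getElem?_append_left hil] at hget
    refine h i t hi (by simp only [List.length_append, List.length_cons]; omega) ?_
    rw [List.getElem?_append_left hil]
    exact hget
  · push_neg at hil
    obtain ⟨j, rfl⟩ : ∃ j, i = l.length + j := ⟨i - l.length, by omega⟩
    rw [List.getElem?_append_right hil, Nat.add_sub_cancel_left] at hget
    rcases j with _ | j
    · simp only [List.getElem?_cons_zero, Option.some.injEq] at hget
      subst hget
      rcases hp with hp | hp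
      · exact hp
      · exfalso
        have hl0 : l.length = 0 := by simp [hp]
        omega
    rcases j with _ | k
    · simp only [List.getElem?_cons_succ, List.getElem?_cons_zero, Option.some.injEq] at hget
      subst hget
      rcases hs with hs | hs
      · exact hs
      · exfalso
        have hr0 : r.length = 0 := by simp [hs]
        omega
    · simp only [List.getElem?_cons_succ] at hget
      refine h (l.length + (k + 1)) t (by omega)
        (by simp only [List.length_append, List.length_cons]; omega) ?_
      rw [List.getElem?_append_right (by omega), Nat.add_sub_cancel_left,
        List.getElem?_cons_succ]
      exact hget

theorem intNE_one {l r : List (List α)} {m q : List α}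
    (h : IntNE (l ++ m :: r)) (hq : q ≠ [] ∨ l = [] ∨ r = []) :
    IntNE (l ++ q :: r) := by
  intro i t hi hlen hget
  simp only [List.length_append, List.length_cons] at hlen
  by_cases hil : i < l.length
  · rw [List.getElem?_append_left hil] at hget
    refine h i t hi (by simp only [List.length_append, List.length_cons]; omega) ?_
    rw [List.getElem?_append_left hil]
    exact hget
  · push_neg at hil
    obtain ⟨j, rfl⟩ : ∃ j, i = l.length + j := ⟨i - l.length, by omega⟩
    rw [List.getElem?_append_right hil, Nat.add_sub_cancel_left] at hget
    rcases j with _ | k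
    · simp only [List.getElem?_cons_zero, Option.some.injEq] at hget
      subst hget
      rcases hq with hq | hq | hq
      · exact hq
      · exfalso
        have hl0 : l.length = 0 := by simp [hq]
        omega
      · exfalso
        have hr0 : r.length = 0 := by simp [hq]
        omega
    · simp only [List.getElem?_cons_succ] at hget
      refine h (l.length + (k + 1)) t (by omega)
        (by simp only [List.length_append, List.length_cons]; omega) ?_
      rw [List.getElem?_append_right (by omega), Nat.add_sub_cancel_left,
        List.getElem?_cons_succ]
      exact hget

theorem intNE_zero {l r : List (List α)} {m : List α} (h : IntNE (l ++ m :: r)) :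
    IntNE (l ++ r) := by
  intro i t hi hlen hget
  simp only [List.length_append] at hlen
  by_cases hil : i < l.length
  · rw [List.getElem?_append_left hil] at hget
    refine h i t hi (by simp only [List.length_append, List.length_cons]; omega) ?_
    rw [List.getElem?_append_left hil]
    exact hget
  · push_neg at hil
    obtain ⟨j, rfl⟩ : ∃ j, i = l.length + j := ⟨i - l.length, by omega⟩
    rw [List.getElem?_append_right hil, Nat.add_sub_cancel_left] at hget
    refine h (l.length + (j + 1)) t (by omega)
      (by simp only [List.length_append, List.length_cons]; omega) ?_
    rw [List.getElem?_append_right (by omega), Nat.add_sub_cancel_left,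
      List.getElem?_cons_succ]
    exact hget

theorem swap_tr {x₀ y₀ : List α} {c d : α} (hcd : I c d) :
    ∀ x a y, x₀ ++ [c, d] ++ y₀ = x ++ a :: y → (∀ b ∈ x, I a b) →
      ∃ x' y', x₀ ++ [d, c] ++ y₀ = x' ++ a :: y' ∧ (∀ b ∈ x', I a b) ∧
        TrEq I (x ++ y) (x' ++ y') := by
  intro x a y heq hind
  have heq' : x ++ a :: y = x₀ ++ c :: d :: y₀ := by
    rw [← heq]; simp [List.append_assoc]
  rcases List.append_eq_append_iff.1 heq' with ⟨m, hm1, hm2⟩ | ⟨m, hm1, hm2⟩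
  · -- hm1 : x₀ = x ++ m, hm2 : a :: y = m ++ c :: d :: y₀
    rcases m with _ | ⟨a', m'⟩
    · simp only [List.nil_append] at hm2
      injection hm2 with ha hy
      subst ha; subst hy
      have hx : x₀ = x := by simpa using hm1
      subst hx
      refine ⟨x₀ ++ [d], y₀, by simp [List.append_assoc], ?_, ?_⟩
      · intro b hb
        rcases List.mem_append.1 hb with h' | h'
        · exact hind b h'
        · rw [List.mem_singleton.1 h']
          exact hcd
      · have he : (x₀ ++ [d]) ++ y₀ = x₀ ++ d :: y₀ := by simp
        rw [he]
        exact TrEq.refl _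
    · simp only [List.cons_append] at hm2
      injection hm2 with ha hy
      subst ha; subst hy
      refine ⟨x, m' ++ d :: c :: y₀, ?_, hind, ?_⟩
      · rw [hm1]; simp [List.append_assoc]
      · have h1 : x ++ (m' ++ c :: d :: y₀) = (x ++ m') ++ [c, d] ++ y₀ := by
          simp [List.append_assoc]
        have h2 : x ++ (m' ++ d :: c :: y₀) = (x ++ m') ++ [d, c] ++ y₀ := by
          simp [List.append_assoc]
        rw [h1, h2]
        exact TrEq.swap _ _ hcd
  · -- hm1 : x = x₀ ++ m, hm2 : c :: d :: y₀ = m ++ a :: y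
    rcases m with _ | ⟨c', m'⟩
    · simp only [List.nil_append] at hm2
      injection hm2 with ha hy
      subst ha
      have hx : x = x₀ := by simpa using hm1
      subst hx
      refine ⟨x ++ [d], y₀, by simp [List.append_assoc], ?_, ?_⟩
      · intro b hb
        rcases List.mem_append.1 hb with h' | h'
        · exact hind b h'
        · rw [List.mem_singleton.1 h']
          exact hcd
      · have he : (x ++ [d]) ++ y₀ = x ++ d :: y₀ := by simp
        rw [he, ← hy]
        exact TrEq.refl _
    · simp only [List.cons_append] at hm2
      injection hm2 with hc hm2
      subst hc
      rcases m' with _ | ⟨d', m''⟩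
      · simp only [List.nil_append] at hm2
        injection hm2 with ha hy
        subst ha
        refine ⟨x₀, c :: y₀, by simp, ?_, ?_⟩
        · intro b hb
          exact hind b (by rw [hm1]; exact List.mem_append_left _ hb)
        · rw [hm1, ← hy]
          have he : (x₀ ++ [c]) ++ y₀ = x₀ ++ c :: y₀ := by simp
          rw [he]
          exact TrEq.refl _
      · simp only [List.cons_append] at hm2
        injection hm2 with hd hy
        subst hd
        refine ⟨x₀ ++ d :: c :: m'', y, ?_, ?_, ?_⟩
        · rw [hy]; simp [List.append_assoc]
        · intro b hb
          refine hind b ?_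
          rw [hm1]
          simp only [List.mem_append, List.mem_cons] at hb ⊢
          tauto
        · rw [hm1]
          have h1 : (x₀ ++ c :: d :: m'') ++ y = x₀ ++ [c, d] ++ (m'' ++ y) := by
            simp [List.append_assoc]
          have h2 : (x₀ ++ d :: c :: m'') ++ y = x₀ ++ [d, c] ++ (m'' ++ y) := by
            simp [List.append_assoc]
          rw [h1, h2]
          exact TrEq.swap _ _ hcd

theorem treq_extract (hsym : Symmetric I) {u v : List α} (h : TrEq I u v) :
    ∀ x a y, u = x ++ a :: y → (∀ b ∈ x, I a b) →
      ∃ x' y', v = x' ++ a :: y' ∧ (∀ b ∈ x', I a b) ∧ TrEq I (x ++ y) (x' ++ y') := by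
  have main : ∀ {u v : List α}, TrEq I u v →
      ((∀ x a y, u = x ++ a :: y → (∀ b ∈ x, I a b) →
        ∃ x' y', v = x' ++ a :: y' ∧ (∀ b ∈ x', I a b) ∧ TrEq I (x ++ y) (x' ++ y')) ∧
      (∀ x a y, v = x ++ a :: y → (∀ b ∈ x, I a b) →
        ∃ x' y', u = x' ++ a :: y' ∧ (∀ b ∈ x', I a b) ∧ TrEq I (x ++ y) (x' ++ y'))) := by
    intro u v h
    induction h with
    | refl u =>
      exact ⟨fun x a y hx hi => ⟨x, y, hx, hi, TrEq.refl _⟩,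
        fun x a y hx hi => ⟨x, y, hx, hi, TrEq.refl _⟩⟩
    | symm _ ih => exact ⟨ih.2, ih.1⟩
    | trans h1 h2 ih1 ih2 =>
      constructor
      · intro x a y hx hi
        obtain ⟨x', y', hv, hi', ht⟩ := ih1.1 x a y hx hi
        obtain ⟨x'', y'', hw, hi'', ht'⟩ := ih2.1 x' a y' hv hi'
        exact ⟨x'', y'', hw, hi'', ht.trans ht'⟩
      · intro x a y hx hi
        obtain ⟨x', y', hv, hi', ht⟩ := ih2.2 x a y hx hi
        obtain ⟨x'', y'', hw, hi'', ht'⟩ := ih1.2 x' a y' hv hi'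
        exact ⟨x'', y'', hw, hi'', ht.trans ht'⟩
    | @swap x₀ y₀ c d hcd =>
      exact ⟨fun x a y hx hi => swap_tr hcd x a y hx hi,
        fun x a y hx hi => swap_tr (hsym hcd) x a y hx hi⟩
  exact (main h).1

theorem forall2_split_left {β γ : Type*} {R : β → γ → Prop} :
    ∀ {A : List β} {x : β} {B : List β} {Γ : List γ}, List.Forall₂ R (A ++ x :: B) Γ →
    ∃ Γ₁ G Γ₂, Γ = Γ₁ ++ G :: Γ₂ ∧ List.Forall₂ R A Γ₁ ∧ R x G ∧ List.Forall₂ R B Γ₂ := by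
  intro A
  induction A with
  | nil =>
    intro x B Γ h
    rw [List.nil_append] at h
    rcases List.forall₂_cons_left_iff.1 h with ⟨G, Γ₂, hx, hB, rfl⟩
    exact ⟨[], G, Γ₂, by simp, List.Forall₂.nil, hx, hB⟩
  | cons t A' ih =>
    intro x B Γ h
    rw [List.cons_append] at h
    rcases List.forall₂_cons_left_iff.1 h with ⟨G0, Γ', ht, hrest, rfl⟩
    obtain ⟨Γ₁, G, Γ₂, rfl, hA, hx, hB⟩ := ih hrest
    exact ⟨G0 :: Γ₁, G, Γ₂, by simp, List.Forall₂.cons ht hA, hx, hB⟩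

theorem forall2_to_rexp {a : α} : ∀ {ts₁ : List (List α)} {Γ₁ : List (RegularExpression α)},
    List.Forall₂ (fun t G => t ∈ G.matches') ts₁ Γ₁ →
    (∀ t ∈ ts₁, ∀ b ∈ t, I a b) →
    List.Forall₂ (fun t G => t ∈ G.matches') ts₁ (Γ₁.map (Rexp I a)) := by
  intro ts₁ Γ₁ h
  induction h with
  | nil => intro _; exact List.Forall₂.nil
  | cons hv hrest ih =>
    intro hind
    simp only [List.map_cons]
    exact List.Forall₂.cons ((mem_rexp_iff _ _).2 ⟨hv, hind _ (by simp)⟩)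
      (ih (fun t ht => hind t (by simp [ht])))

/-- Completeness of the refined Antimirov machine. -/
theorem lemC (hsym : Symmetric I) :
    ∀ (u : List α) (Γ : List (RegularExpression α)) (ts : List (List α)),
      TrEq I u ts.flatten →
      List.Forall₂ (fun t G => t ∈ G.matches') ts Γ → IntNE ts →
      ∃ Γ', Steps I Γ u Γ' ∧ (∀ G ∈ Γ', [] ∈ G.matches') ∧ Γ'.length ≤ 2 := by
  intro u
  induction u with
  | nil =>
    intro Γ ts h1 h2 h4
    have hflat : ts.flatten = [] := List.length_eq_zero_iff.1 (by simpa using h1.length_eq'.symm)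
    have hall : ∀ t ∈ ts, t = [] := List.flatten_eq_nil_iff.1 hflat
    refine ⟨Γ, Steps.nil Γ, ?_, ?_⟩
    · intro G hG
      obtain ⟨t, ht, hm⟩ := forall2_mem_right h2 G hG
      rwa [hall t ht] at hm
    · calc Γ.length = ts.length := h2.length_eq.symm
        _ ≤ 2 := h4.le_two hall
  | cons a u₂ ih =>
    intro Γ ts h1 h2 h4
    obtain ⟨x, y, hv, hxind, hrest⟩ := treq_extract hsym h1 [] a u₂ rfl (by simp)
    have hrest' : TrEq I u₂ (x ++ y) := by simpa using hrest
    obtain ⟨ts₁, p, s, ts₂, hts, hx, hy⟩ := flatten_split ts hv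
    subst hts
    obtain ⟨Γ₁, G, Γ₂, rfl, hf1, hpG, hf2⟩ := forall2_split_left h2
    have hpind : ∀ b ∈ p, I a b := fun b hb =>
      hxind b (by rw [hx]; exact List.mem_append_right _ hb)
    have hts1ind : ∀ t ∈ ts₁, ∀ b ∈ t, I a b := fun t ht b hb =>
      hxind b (by rw [hx]; exact List.mem_append_left _ (List.mem_flatten.2 ⟨t, ht, hb⟩))
    obtain ⟨El, Er, hRA, hpEl, hsEr⟩ := rantim_complete hpG hpind
    have hf1' : List.Forall₂ (fun t G => t ∈ G.matches') ts₁ (Γ₁.map (Rexp I a)) :=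
      forall2_to_rexp hf1 hts1ind
    by_cases hA : p = [] ∧ ts₁ ≠ []
    · have hΓ1 : Γ₁ ≠ [] := by
        intro h0; subst h0
        exact hA.2 (List.forall₂_nil_right_iff.1 hf1)
      by_cases hB : s = [] ∧ ts₂ ≠ []
      · -- dropBoth
        have hΓ2 : Γ₂ ≠ [] := by
          intro h0; subst h0
          exact hB.2 (List.forall₂_nil_right_iff.1 hf2)
        have hstep := RAntimL.dropBoth (I := I) hRA (hA.1 ▸ hpEl) (hB.1 ▸ hsEr) hΓ1 hΓ2
        have e : x ++ y = (ts₁ ++ ts₂).flatten := by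
          simp [hx, hy, hA.1, hB.1, List.flatten_append, List.append_assoc]
        obtain ⟨Γ', hsteps, hnul, hlen⟩ := ih _ _ (e ▸ hrest')
          (List.rel_append hf1' hf2) (intNE_zero h4)
        exact ⟨Γ', Steps.cons hstep hsteps, hnul, hlen⟩
      · -- dropL
        have hcond : s ≠ [] ∨ ts₂ = [] := by tauto
        have hstep := RAntimL.dropL (I := I) (Δ := Γ₂) hRA (hA.1 ▸ hpEl) hΓ1
        have e : x ++ y = (ts₁ ++ s :: ts₂).flatten := by
          simp [hx, hy, hA.1, List.flatten_append, List.append_assoc]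
        obtain ⟨Γ', hsteps, hnul, hlen⟩ := ih _ _ (e ▸ hrest')
          (List.rel_append hf1' (List.Forall₂.cons hsEr hf2))
          (intNE_one h4 (by tauto))
        exact ⟨Γ', Steps.cons hstep hsteps, hnul, hlen⟩
    · by_cases hB : s = [] ∧ ts₂ ≠ []
      · -- dropR
        have hΓ2 : Γ₂ ≠ [] := by
          intro h0; subst h0
          exact hB.2 (List.forall₂_nil_right_iff.1 hf2)
        have hstep := RAntimL.dropR (I := I) (Γ := Γ₁) hRA (hB.1 ▸ hsEr) hΓ2
        have e : x ++ y = (ts₁ ++ p :: ts₂).flatten := by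
          simp [hx, hy, hB.1, List.flatten_append, List.append_assoc]
        have hts1 : p ≠ [] ∨ ts₁ = [] := by tauto
        obtain ⟨Γ', hsteps, hnul, hlen⟩ := ih _ _ (e ▸ hrest')
          (List.rel_append hf1' (List.Forall₂.cons hpEl hf2))
          (intNE_one h4 (by tauto))
        exact ⟨Γ', Steps.cons hstep hsteps, hnul, hlen⟩
      · -- split
        have hstep := RAntimL.split (I := I) (Γ := Γ₁) (Δ := Γ₂) hRA
        have e : x ++ y = (ts₁ ++ p :: s :: ts₂).flatten := by
          simp [hx, hy, List.flatten_append, List.append_assoc]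
        obtain ⟨Γ', hsteps, hnul, hlen⟩ := ih _ _ (e ▸ hrest')
          (List.rel_append hf1' (List.Forall₂.cons hpEl (List.Forall₂.cons hsEr hf2)))
          (intNE_two h4 (by tauto) (by tauto))
        exact ⟨Γ', Steps.cons hstep hsteps, hnul, hlen⟩


end Aux18

/-- the refined Antimirov automaton accepts the trace closure. -/
theorem stmt18 {α : Type u} [Fintype α] (I : α → α → Prop)
    (hirr : Irreflexive I) (hsym : Symmetric I) (E : RegularExpression α) (u : List α) :
    u ∈ TrClosure I E.matches' ↔
      (u = [] ∧ [] ∈ E.matches') ∨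
      (u ≠ [] ∧ ∃ E0 E1, RAntimW I E u [E0, E1] ∧
        [] ∈ E0.matches' ∧ [] ∈ E1.matches') := by
  constructor
  · rintro ⟨z, hz, hteq⟩
    by_cases hu : u = []
    · subst hu
      left
      refine ⟨rfl, ?_⟩
      have hz0 : z = [] := List.length_eq_zero_iff.1 (by simpa using hteq.length_eq'.symm)
      rwa [hz0] at hz
    · right
      refine ⟨hu, ?_⟩
      have h1 : TrEq I u ([z] : List (List α)).flatten := by simpa using hteq
      obtain ⟨Γ', hsteps, hnul, hlen⟩ := lemC hsym u [E] [z] h1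
        (List.Forall₂.cons hz List.Forall₂.nil) (intNE_singleton z)
      have hlen2 := steps_len hsteps hu
      match Γ', hsteps, hnul, hlen, hlen2 with
      | [], _, _, _, hlen2 => simp at hlen2
      | [_], _, _, _, hlen2 => simp at hlen2
      | E0 :: E1 :: E2 :: t, _, _, hlen, _ => simp at hlen
      | [E0, E1], hsteps, hnul, _, _ =>
        exact ⟨E0, E1, rantimw_of_steps hsteps, hnul E0 (by simp), hnul E1 (by simp)⟩
  · rintro (⟨rfl, hnil⟩ | ⟨hu, E0, E1, hw, h0, h1⟩)
    · exact ⟨[], hnil, TrEq.refl []⟩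
    · obtain ⟨z, hz, hteq⟩ := rantimw_sound hw
        (List.Forall₂.cons h0 (List.Forall₂.cons h1 List.Forall₂.nil))
      exact ⟨z, hz, by simpa using hteq⟩
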